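/- arXiv:2509.17215 — 2 statements merged into one kernel-verified Lean document; each statement's English description precedes it below -/
import Mathlib

section
/- For the Laguerre recursion L(k+1) = A_l L(k), the matrix A_l satisfies ∑_{k=0}^{∞} L(k) L(k)ᵀ = I_N, i.e., the infinite sum of outer products of the Laguerre state vectors equals the identity matrix (this is the matrix form of the orthonormality of the Laguerre functions). -/
open Matrix

open Filter Finset in
lemma aux_strictLower_pow {N : ℕ} (M : Matrix (Fin N) (Fin N) ℝ)
    (hM : ∀ i j : Fin N, (i : ℕ) ≤ j → M i j = 0) :
    ∀ (n : ℕ) (i j : Fin N), (i : ℕ) < (j : ℕ) + n → (M ^ n) i j = 0 := by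
  intro n
  induction n with
  | zero =>
    intro i j hij
    simp only [pow_zero, Matrix.one_apply]
    rw [if_neg]
    intro h; subst h; omega
  | succ n ih =>
    intro i j hij
    rw [pow_succ', Matrix.mul_apply]
    apply Finset.sum_eq_zero
    intro a _
    by_cases ha : (i : ℕ) ≤ (a : ℕ)
    · rw [hM i a ha, zero_mul]
    · rw [ih a j (by omega), mul_zero]

-- outer product conjugation

open Filter Finset in
lemma aux_outer {N : ℕ} (M : Matrix (Fin N) (Fin N) ℝ) (v : Fin N → ℝ) :
    vecMulVec (M.mulVec v) (M.mulVec v) = M * vecMulVec v v * Mᵀ := by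
  ext i j
  simp only [vecMulVec_apply, Matrix.mul_apply, transpose_apply, mulVec, dotProduct]
  rw [Finset.sum_mul_sum]
  rw [Finset.sum_comm]
  apply Finset.sum_congr rfl
  intro b _
  rw [Finset.sum_mul]
  apply Finset.sum_congr rfl
  intro a _
  ring

open Filter Finset in
lemma aux_key {N : ℕ} (α β : ℝ) (hα0 : 0 ≤ α) (hα1 : α < 1) (hβ : β = 1 - α ^ 2)
    (Al : Matrix (Fin N) (Fin N) ℝ)
    (hAl : ∀ i j : Fin N, Al i j =
      if i = j then α else if (j : ℕ) < (i : ℕ) then (-α) ^ ((i : ℕ) - (j : ℕ) - 1) * β else 0)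
    (L0 : Fin N → ℝ) (hL0 : ∀ i : Fin N, L0 i = Real.sqrt β * (-α) ^ (i : ℕ)) :
    Al * Alᵀ + vecMulVec L0 L0 = 1 := by
  have hβpos : 0 < β := by nlinarith
  have hsq : Real.sqrt β * Real.sqrt β = β := Real.mul_self_sqrt hβpos.le
  have hne : α ^ 2 - 1 ≠ 0 := by nlinarith
  have hne' : α ^ 2 ≠ 1 := by intro h; exact hne (by rw [h]; ring)
  have hLij : ∀ i j : Fin N, L0 i * L0 j = β * ((-α) ^ ((i:ℕ)) * (-α) ^ ((j:ℕ))) := by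
    intro i j
    rw [hL0 i, hL0 j]
    calc Real.sqrt β * (-α) ^ (i:ℕ) * (Real.sqrt β * (-α) ^ (j:ℕ))
        = (Real.sqrt β * Real.sqrt β) * ((-α) ^ (i:ℕ) * (-α) ^ (j:ℕ)) := by ring
      _ = β * ((-α) ^ (i:ℕ) * (-α) ^ (j:ℕ)) := by rw [hsq]
  have main : ∀ i j : Fin N, (j : ℕ) ≤ (i : ℕ) →
      (∑ k, Al i k * Al j k) + L0 i * L0 j = if i = j then 1 else 0 := by
    intro i j hji
    set g : ℕ → ℝ := fun k =>
      (if (i:ℕ) = k then α else if k < (i:ℕ) then (-α) ^ ((i:ℕ) - k - 1) * β else 0) *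
      (if (j:ℕ) = k then α else if k < (j:ℕ) then (-α) ^ ((j:ℕ) - k - 1) * β else 0) with hg
    have hsum1 : (∑ k, Al i k * Al j k) = ∑ k ∈ range N, g k := by
      rw [← Fin.sum_univ_eq_sum_range g N]
      apply Finset.sum_congr rfl
      intro k _
      rw [hAl i k, hAl j k, hg]
      simp only [Fin.ext_iff]
    have hsum2 : ∑ k ∈ range N, g k = ∑ k ∈ range ((j:ℕ) + 1), g k := by
      symm
      apply Finset.sum_subset (Finset.range_subset_range.2 (by omega))
      intro k _ hk
      simp only [mem_range, not_lt] at hk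
      have h1 : ¬ ((j:ℕ) = k) := by omega
      have h2 : ¬ (k < (j:ℕ)) := by omega
      rw [hg]
      simp only [h1, h2, if_false, mul_zero]
    have hsum3 : ∑ k ∈ range ((j:ℕ) + 1), g k = (∑ k ∈ range (j:ℕ), g k) + g (j:ℕ) :=
      Finset.sum_range_succ g (j:ℕ)
    set S : ℝ := ((α ^ 2) ^ (j:ℕ) - 1) / (α ^ 2 - 1) with hSdef
    have hS : β * S = 1 - (α ^ 2) ^ (j:ℕ) := by
      rw [hSdef, hβ]; field_simp; ring
    have hsum4 : (∑ k ∈ range (j:ℕ), g k) = (-α) ^ ((i:ℕ) - (j:ℕ)) * β ^ 2 * S := by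
      rw [← Finset.sum_range_reflect]
      have : ∀ t ∈ range (j:ℕ), g ((j:ℕ) - 1 - t) = ((-α) ^ ((i:ℕ) - (j:ℕ)) * (α ^ 2) ^ t) * β ^ 2 := by
        intro t ht
        simp only [mem_range] at ht
        have h1 : ¬ ((i:ℕ) = (j:ℕ) - 1 - t) := by omega
        have h2 : ((j:ℕ) - 1 - t) < (i:ℕ) := by omega
        have h3 : ¬ ((j:ℕ) = (j:ℕ) - 1 - t) := by omega
        have h4 : ((j:ℕ) - 1 - t) < (j:ℕ) := by omega
        have e1 : (i:ℕ) - ((j:ℕ) - 1 - t) - 1 = ((i:ℕ) - (j:ℕ)) + t := by omega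
        have e2 : (j:ℕ) - ((j:ℕ) - 1 - t) - 1 = t := by omega
        rw [hg]
        simp only [h1, h2, h3, h4, if_false, if_true, e1, e2]
        have h5 : (α ^ 2) ^ t = (-α) ^ t * (-α) ^ t := by
          rw [← mul_pow]; congr 1; ring
        rw [pow_add, h5]
        ring
      rw [Finset.sum_congr rfl this, ← Finset.sum_mul, ← Finset.mul_sum,
        geom_sum_eq hne' (j:ℕ), hSdef]
      ring
    rw [hsum1, hsum2, hsum3, hsum4, hLij]
    by_cases hij : i = j
    · subst hij
      have hgj : g (i:ℕ) = α * α := by rw [hg]; simp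
      have h6 : (-α) ^ (i:ℕ) * (-α) ^ (i:ℕ) = (α ^ 2) ^ (i:ℕ) := by
        rw [← mul_pow, neg_mul_neg, ← sq]
      simp only [eq_self_iff_true, if_true, Nat.sub_self, pow_zero, one_mul]
      rw [hgj, h6]
      linear_combination β * hS + hβ
    · have hlt : (j:ℕ) < (i:ℕ) := by
        rcases lt_or_eq_of_le hji with h | h
        · exact h
        · exact absurd (Fin.ext h.symm) hij
      simp only [if_neg hij]
      rw [hg]
      have h1 : ¬ ((i:ℕ) = (j:ℕ)) := by omega
      simp only [h1, hlt, if_false, if_true, if_pos rfl]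
      have e4 : (-α) ^ ((i:ℕ)) * (-α) ^ ((j:ℕ)) = (-α) ^ ((i:ℕ) - (j:ℕ)) * (α ^ 2) ^ (j:ℕ) := by
        rw [← pow_add, show (α ^ 2) = (-α) ^ 2 from (neg_sq α).symm, ← pow_mul, ← pow_add]
        congr 1
        omega
      have e5 : (-α) ^ ((i:ℕ) - (j:ℕ)) = (-α) ^ ((i:ℕ) - (j:ℕ) - 1) * (-α) := by
        rw [← pow_succ]
        congr 1
        omega
      rw [e4, e5]
      linear_combination (-(α * ((-α) ^ ((i:ℕ) - (j:ℕ) - 1)) * β)) * hS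
  ext i j
  simp only [Matrix.add_apply, Matrix.mul_apply, transpose_apply, vecMulVec_apply,
    Matrix.one_apply]
  rcases le_total (j:ℕ) (i:ℕ) with h | h
  · exact main i j h
  · have h1 : (∑ k, Al i k * Al j k) = ∑ k, Al j k * Al i k := by
      apply Finset.sum_congr rfl; intro k _; ring
    have h2 : L0 i * L0 j = L0 j * L0 i := by ring
    have h3 : (if i = j then (1:ℝ) else 0) = (if j = i then (1:ℝ) else 0) := by
      simp [eq_comm]
    rw [h1, h2, h3]
    exact main j i h

open Filter Finset in
lemma aux_coef (α : ℝ) (hα0 : 0 ≤ α) (hα1 : α < 1) (m : ℕ) :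
    Tendsto (fun n : ℕ => α ^ (n - m) * (n.choose m : ℝ)) atTop (nhds 0) := by
  rcases eq_or_lt_of_le hα0 with h0 | h0
  · apply Tendsto.congr' _ (tendsto_const_nhds (x := (0:ℝ)))
    filter_upwards [eventually_ge_atTop (m + 1)] with n hn
    rw [← h0, zero_pow (by omega), zero_mul]
  · have hb : Tendsto (fun n : ℕ => (1 / α ^ m) * ((n : ℝ) ^ m * α ^ n)) atTop (nhds 0) := by
      have hs : Summable (fun n : ℕ => (n : ℝ) ^ m * α ^ n) := by
        have := summable_pow_mul_geometric_of_norm_lt_one (R := ℝ) m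
          (r := α) (by rwa [Real.norm_eq_abs, abs_of_nonneg hα0])
        simpa using this
      simpa using (hs.tendsto_atTop_zero).const_mul (1 / α ^ m)
    apply squeeze_zero' _ _ hb
    · filter_upwards with n
      positivity
    · filter_upwards [eventually_ge_atTop m] with n hn
      have h1 : (n.choose m : ℝ) ≤ (n : ℝ) ^ m := by
        exact_mod_cast Nat.choose_le_pow n m
      have h2 : α ^ (n - m) = α ^ n / α ^ m := by
        rw [eq_div_iff (by positivity), ← pow_add]
        congr 1
        omega
      rw [h2]
      rw [div_mul_eq_mul_div, one_div, inv_mul_eq_div]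
      apply div_le_div_of_nonneg_right ?_ (by positivity)
      calc α ^ n * (n.choose m : ℝ) ≤ α ^ n * (n:ℝ)^m := by
            apply mul_le_mul_of_nonneg_left h1 (by positivity)
        _ = (n:ℝ)^m * α ^ n := by ring

open Filter Finset in
lemma aux_pow_tendsto {N : ℕ} (α : ℝ) (hα0 : 0 ≤ α) (hα1 : α < 1)
    (Al : Matrix (Fin N) (Fin N) ℝ)
    (hNl : ∀ i j : Fin N, (i : ℕ) ≤ j → (Al - α • 1) i j = 0) :
    Tendsto (fun n : ℕ => Al ^ n) atTop (nhds 0) := by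
  set Nl : Matrix (Fin N) (Fin N) ℝ := Al - α • 1 with hNldef
  have hNpow : ∀ m : ℕ, N ≤ m → Nl ^ m = 0 := by
    intro m hm
    ext i j
    rw [Matrix.zero_apply]
    exact aux_strictLower_pow Nl hNl m i j (by have := i.isLt; omega)
  have hcomm : Commute Nl (α • (1 : Matrix (Fin N) (Fin N) ℝ)) :=
    (Commute.one_right Nl).smul_right α
  have hAn : ∀ n : ℕ, N ≤ n →
      Al ^ n = ∑ m ∈ range N, (α ^ (n - m) * (n.choose m : ℝ)) • Nl ^ m := by
    intro n hn
    have hAl' : Al = Nl + α • 1 := by rw [hNldef]; abel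
    rw [hAl', hcomm.add_pow]
    have htrunc : ∑ m ∈ range (n + 1), Nl ^ m * (α • (1:Matrix (Fin N) (Fin N) ℝ)) ^ (n - m) * (n.choose m : ℕ)
        = ∑ m ∈ range N, Nl ^ m * (α • (1:Matrix (Fin N) (Fin N) ℝ)) ^ (n - m) * (n.choose m : ℕ) := by
      symm
      apply Finset.sum_subset (Finset.range_subset_range.2 (by omega))
      intro m _ hm
      simp only [mem_range, not_lt] at hm
      rw [hNpow m hm]
      simp
    rw [htrunc]
    apply Finset.sum_congr rfl
    intro m _
    rw [smul_pow, one_pow, mul_smul_comm, Matrix.mul_one]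
    have hcast : (α ^ (n - m)) • Nl ^ m * ((n.choose m : ℕ) : Matrix (Fin N) (Fin N) ℝ)
        = (n.choose m) • ((α ^ (n - m)) • Nl ^ m) := by
      rw [nsmul_eq_mul, Nat.cast_comm]
    rw [hcast, ← Nat.cast_smul_eq_nsmul ℝ, smul_smul]
    rw [mul_comm]
  have hlim : Tendsto (fun n : ℕ => ∑ m ∈ range N,
      (α ^ (n - m) * (n.choose m : ℝ)) • Nl ^ m) atTop (nhds 0) := by
    have : (0 : Matrix (Fin N) (Fin N) ℝ) = ∑ m ∈ range N, (0:ℝ) • Nl ^ m := by simp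
    rw [this]
    apply tendsto_finset_sum
    intro m _
    exact (aux_coef α hα0 hα1 m).smul_const (Nl ^ m)
  apply Tendsto.congr' _ hlim
  filter_upwards [eventually_ge_atTop N] with n hn
  exact (hAn n hn).symm

open Filter Finset in
/-- Matrix form of the orthonormality of the Laguerre functions: with `0 ≤ α < 1`,
`β = 1 - α²`, `L(k) = A_lᵏ L(0)`, the infinite sum of outer products
`∑_{k=0}^∞ L(k) L(k)ᵀ` equals the identity matrix `I_N`. -/
theorem stmt_9 {N : ℕ} (α β : ℝ) (hα0 : 0 ≤ α) (hα1 : α < 1) (hβ : β = 1 - α ^ 2)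
    (Al : Matrix (Fin N) (Fin N) ℝ)
    (hAl : ∀ i j : Fin N, Al i j =
      if i = j then α else if (j : ℕ) < (i : ℕ) then (-α) ^ ((i : ℕ) - (j : ℕ) - 1) * β else 0)
    (L0 : Fin N → ℝ) (hL0 : ∀ i : Fin N, L0 i = Real.sqrt β * (-α) ^ (i : ℕ)) :
    HasSum (fun k : ℕ => vecMulVec ((Al ^ k).mulVec L0) ((Al ^ k).mulVec L0))
      (1 : Matrix (Fin N) (Fin N) ℝ) := by
  set f : ℕ → Matrix (Fin N) (Fin N) ℝ :=
    fun k => vecMulVec ((Al ^ k).mulVec L0) ((Al ^ k).mulVec L0) with hf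
  have key := aux_key α β hα0 hα1 hβ Al hAl L0 hL0
  have hV : vecMulVec L0 L0 = 1 - Al * Alᵀ := by rw [← key]; abel
  -- telescoping
  have htel : ∀ n : ℕ, ∑ k ∈ range n, f k = 1 - Al ^ n * (Al ^ n)ᵀ := by
    intro n
    induction n with
    | zero => simp
    | succ n ih =>
      rw [Finset.sum_range_succ, ih]
      simp only [hf]
      rw [aux_outer (Al ^ n) L0, hV, pow_succ, transpose_mul]
      noncomm_ring
  -- strict lower triangularity of Al - α • 1
  have hNl : ∀ i j : Fin N, (i : ℕ) ≤ j → (Al - α • 1) i j = 0 := by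
    intro i j hij
    simp only [Matrix.sub_apply, Matrix.smul_apply, Matrix.one_apply, hAl, smul_eq_mul]
    by_cases h : i = j
    · simp [h]
    · have : ¬ ((j:ℕ) < (i:ℕ)) := by omega
      simp [h, this]
  -- limit of partial sums
  have hA0 := aux_pow_tendsto α hα0 hα1 Al hNl
  have hM0 : Tendsto (fun n : ℕ => Al ^ n * (Al ^ n)ᵀ) atTop (nhds 0) := by
    have hcont : Continuous (fun M : Matrix (Fin N) (Fin N) ℝ => M * Mᵀ) :=
      continuous_id.matrix_mul continuous_id.matrix_transpose
    have := (hcont.tendsto 0).comp hA0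
    simpa [Function.comp_def, transpose_pow] using this
  have hpartial : Tendsto (fun n : ℕ => ∑ k ∈ range n, f k) atTop
      (nhds (1 : Matrix (Fin N) (Fin N) ℝ)) := by
    have := tendsto_const_nhds (x := (1 : Matrix (Fin N) (Fin N) ℝ)) (f := atTop (α := ℕ)) |>.sub hM0
    rw [sub_zero] at this
    exact Tendsto.congr (fun n => (htel n).symm) this
  -- summability
  have hdiag : ∀ i : Fin N, Summable (fun k : ℕ => ((Al ^ k).mulVec L0 i) ^ 2) := by
    intro i
    apply summable_of_sum_range_le (c := 1) (fun n => sq_nonneg _)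
    intro n
    have h1 : ∑ k ∈ range n, ((Al ^ k).mulVec L0 i) ^ 2 = (∑ k ∈ range n, f k) i i := by
      rw [Matrix.sum_apply]
      apply Finset.sum_congr rfl
      intro k _
      rw [hf]
      simp [vecMulVec_apply, sq]
    rw [h1, htel n]
    have h2 : (0:ℝ) ≤ (Al ^ n * (Al ^ n)ᵀ) i i := by
      rw [Matrix.mul_apply]
      apply Finset.sum_nonneg
      intro a _
      rw [transpose_apply, ← sq]
      exact sq_nonneg _
    simp only [Matrix.sub_apply, Matrix.one_apply_eq]
    linarith
  have hsummable : Summable f := by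
    show @Summable (Fin N → Fin N → ℝ) ℕ _ _ (fun k i j => f k i j) _
    rw [Pi.summable]
    intro i
    rw [Pi.summable]
    intro j
    have hb : Summable (fun k : ℕ =>
        (((Al ^ k).mulVec L0 i) ^ 2 + ((Al ^ k).mulVec L0 j) ^ 2) / 2) :=
      ((hdiag i).add (hdiag j)).div_const 2
    apply Summable.of_norm
    apply Summable.of_nonneg_of_le (fun k => norm_nonneg _) _ hb
    intro k
    rw [hf]
    simp only [vecMulVec_apply, Real.norm_eq_abs, abs_mul]
    set a := (Al ^ k).mulVec L0 i
    set b := (Al ^ k).mulVec L0 j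
    nlinarith [sq_nonneg (|a| - |b|), sq_abs a, sq_abs b, abs_nonneg a, abs_nonneg b]
  have h1 : HasSum f (∑' k, f k) := hsummable.hasSum
  have h2 : (∑' k, f k) = 1 := tendsto_nhds_unique h1.tendsto_sum_nat hpartial
  rwa [h2] at h1
end

section
/- For the deterministic scalar PSO dynamics with constant parameters, the update (x, v) ↦ (x + ωv + φ(p - x), ωv + φ(p - x)), where φ = c₁r₁ + c₂r₂ > 0 and p is the (fixed) attraction point, is a linear map whose eigenvalues λ satisfy λ² - (1 + ω - φ)λ + ω = 0; the iteration converges to (p, 0) for every initial condition if and only if |ω| < 1 and 0 < φ < 2(1 + ω). -/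
open Matrix Polynomial Filter

/-- Driven contraction: if `a (k+1) = λ a k + b k` with `‖λ‖ < 1` and `b → 0`, then `a → 0`. -/
lemma driven_tendsto_zero (lam : ℂ) (hl : ‖lam‖ < 1) (a b : ℕ → ℂ)
    (hrec : ∀ k, a (k + 1) = lam * a k + b k)
    (hb : Tendsto b atTop (nhds 0)) : Tendsto a atTop (nhds 0) := by
  rw [Metric.tendsto_atTop] at hb ⊢
  intro ε hε
  set r := ‖lam‖ with hr
  have hr0 : 0 ≤ r := norm_nonneg _
  have hr1 : 0 < 1 - r := by linarith
  obtain ⟨N₀, hN₀⟩ := hb (ε * (1 - r) / 4) (by positivity)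
  have key : ∀ m, ‖a (N₀ + m)‖ ≤ r ^ m * ‖a N₀‖ + ε / 4 := by
    intro m
    induction m with
    | zero => simpa using by positivity
    | succ m ih =>
      have h1 : ‖a (N₀ + m + 1)‖ ≤ r * ‖a (N₀ + m)‖ + ‖b (N₀ + m)‖ := by
        rw [hrec]
        calc ‖lam * a (N₀ + m) + b (N₀ + m)‖ ≤ ‖lam * a (N₀ + m)‖ + ‖b (N₀ + m)‖ :=
          norm_add_le _ _
        _ = r * ‖a (N₀ + m)‖ + ‖b (N₀ + m)‖ := by rw [norm_mul]
      have h2 : ‖b (N₀ + m)‖ ≤ ε * (1 - r) / 4 := by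
        have := hN₀ (N₀ + m) (Nat.le_add_right _ _)
        rw [dist_zero_right] at this; linarith
      have h3 : r * ‖a (N₀ + m)‖ ≤ r * (r ^ m * ‖a N₀‖ + ε / 4) :=
        mul_le_mul_of_nonneg_left ih hr0
      have : ‖a (N₀ + (m + 1))‖ ≤ r * (r ^ m * ‖a N₀‖ + ε / 4) + ε * (1 - r) / 4 := by
        have : N₀ + (m + 1) = N₀ + m + 1 := by ring
        rw [this]; linarith
      calc ‖a (N₀ + (m + 1))‖ ≤ r * (r ^ m * ‖a N₀‖ + ε / 4) + ε * (1 - r) / 4 := this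
        _ = r ^ (m + 1) * ‖a N₀‖ + (r * ε / 4 + ε * (1 - r) / 4) := by ring
        _ ≤ r ^ (m + 1) * ‖a N₀‖ + ε / 4 := by nlinarith
  have hpow : Tendsto (fun m => r ^ m * ‖a N₀‖) atTop (nhds 0) := by
    simpa using (tendsto_pow_atTop_nhds_zero_of_norm_lt_one (x := r)
      (by rwa [Real.norm_eq_abs, abs_of_nonneg hr0])).mul_const ‖a N₀‖
  rw [Metric.tendsto_atTop] at hpow
  obtain ⟨M, hM⟩ := hpow (ε / 2) (by positivity)
  refine ⟨N₀ + M, fun n hn => ?_⟩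
  obtain ⟨m, rfl⟩ : ∃ m, n = N₀ + m := ⟨n - N₀, by omega⟩
  have hmM : M ≤ m := by omega
  have hle : r ^ m * ‖a N₀‖ ≤ r ^ M * ‖a N₀‖ :=
    mul_le_mul_of_nonneg_right (pow_le_pow_of_le_one hr0 (le_of_lt hl) hmM)
      (norm_nonneg _)
  have hM' := hM M le_rfl
  rw [dist_zero_right, Real.norm_eq_abs, abs_of_nonneg (by positivity)] at hM'
  have := key m
  rw [dist_zero_right]
  linarith

/-- Jury conditions give two (possibly complex) roots of `z² - t z + d` inside the unit disk. -/
lemma roots_exist (t d : ℝ) (hd : |d| < 1) (ht : |t| < 1 + d) :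
    ∃ lam mu : ℂ, lam + mu = (t : ℂ) ∧ lam * mu = (d : ℂ) ∧ ‖lam‖ < 1 ∧ ‖mu‖ < 1 := by
  have hd1 : d < 1 := (abs_lt.mp hd).2
  have hd2 : -1 < d := (abs_lt.mp hd).1
  have ht1 : t < 1 + d := (abs_lt.mp ht).2
  have ht2 : -(1 + d) < t := (abs_lt.mp ht).1
  rcases le_or_gt 0 (t ^ 2 - 4 * d) with hΔ | hΔ
  · set s := Real.sqrt (t ^ 2 - 4 * d) with hs
    have hs2 : s ^ 2 = t ^ 2 - 4 * d := Real.sq_sqrt hΔ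
    have hs0 : 0 ≤ s := Real.sqrt_nonneg _
    have h1 : s < 2 - t := by
      rw [hs]
      refine (Real.sqrt_lt' (by linarith)).mpr (by nlinarith)
    have h2 : s < 2 + t := by
      rw [hs]
      refine (Real.sqrt_lt' (by linarith)).mpr (by nlinarith)
    refine ⟨(((t + s) / 2 : ℝ) : ℂ), (((t - s) / 2 : ℝ) : ℂ), ?_, ?_, ?_, ?_⟩
    · push_cast; ring
    · push_cast
      rw [show ((t : ℂ) + s) / 2 * ((t - s) / 2) = ((t ^ 2 - s ^ 2) / 4) by ring]
      have : (s : ℂ) ^ 2 = (t : ℂ) ^ 2 - 4 * d := by exact_mod_cast congrArg (Complex.ofReal) hs2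
      rw [this]; ring
    · rw [Complex.norm_real, Real.norm_eq_abs, abs_lt]; constructor <;> nlinarith
    · rw [Complex.norm_real, Real.norm_eq_abs, abs_lt]; constructor <;> nlinarith
  · set s := Real.sqrt (4 * d - t ^ 2) with hs
    have hs2 : s ^ 2 = 4 * d - t ^ 2 := Real.sq_sqrt (by linarith)
    have hd0 : 0 < d := by nlinarith
    refine ⟨⟨t / 2, s / 2⟩, ⟨t / 2, -(s / 2)⟩, ?_, ?_, ?_, ?_⟩
    · apply Complex.ext <;> simp
    · apply Complex.ext <;>
        simp [Complex.mul_re, Complex.mul_im] <;> nlinarith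
    · have : ‖(⟨t / 2, s / 2⟩ : ℂ)‖ ^ 2 = d := by
        rw [← Complex.normSq_eq_norm_sq]
        simp [Complex.normSq_mk]; nlinarith
      nlinarith [norm_nonneg (⟨t / 2, s / 2⟩ : ℂ)]
    · have : ‖(⟨t / 2, -(s / 2)⟩ : ℂ)‖ ^ 2 = d := by
        rw [← Complex.normSq_eq_norm_sq]
        simp [Complex.normSq_mk]; nlinarith
      nlinarith [norm_nonneg (⟨t / 2, -(s / 2)⟩ : ℂ)]

/-- A real two-term linear recurrence whose characteristic roots lie in the unit disk
converges to `0`. -/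
lemma rec_tendsto (t d : ℝ) (hd : |d| < 1) (ht : |t| < 1 + d) (u : ℕ → ℝ)
    (hu : ∀ k, u (k + 2) = t * u (k + 1) - d * u k) :
    Tendsto u atTop (nhds 0) := by
  obtain ⟨lam, mu, hsum, hprod, hl, hm⟩ := roots_exist t d hd ht
  set w : ℕ → ℂ := fun k => (u (k + 1) : ℂ) - lam * (u k : ℂ) with hw
  have hwrec : ∀ k, w (k + 1) = mu * w k := by
    intro k
    have h2 : ((u (k + 2) : ℝ) : ℂ) = (t : ℂ) * (u (k + 1) : ℂ) - (d : ℂ) * (u k : ℂ) := by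
      rw [hu k]; push_cast; ring
    simp only [hw]
    rw [h2, ← hsum, ← hprod]; ring
  have hwform : ∀ k, w k = mu ^ k * w 0 := by
    intro k; induction k with
    | zero => simp
    | succ k ih => rw [hwrec, ih]; ring
  have hwt : Tendsto w atTop (nhds 0) := by
    have := (tendsto_pow_atTop_nhds_zero_of_norm_lt_one hm).mul_const (w 0)
    rw [zero_mul] at this
    exact this.congr fun k => (hwform k).symm
  have hat : Tendsto (fun k => (u k : ℂ)) atTop (nhds 0) := by
    refine driven_tendsto_zero lam hl _ w (fun k => ?_) hwt
    simp only [hw]; ring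
  have := (Complex.continuous_re.tendsto 0).comp hat
  simpa [Function.comp_def] using this

/-- Uniqueness of solutions of a two-term linear recurrence. -/
lemma rec_unique (t d : ℝ) (a b : ℕ → ℝ)
    (ha : ∀ k, a (k + 2) = t * a (k + 1) - d * a k)
    (hb : ∀ k, b (k + 2) = t * b (k + 1) - d * b k)
    (h0 : a 0 = b 0) (h1 : a 1 = b 1) : ∀ k, a k = b k := by
  intro k
  induction k using Nat.strong_induction_on with
  | _ k ih =>
    match k with
    | 0 => exact h0
    | 1 => exact h1
    | (k + 2) => rw [ha, hb, ih (k + 1) (by omega), ih k (by omega)]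

/-- Basic recurrences satisfied by the PSO iterates. -/
lemma pso_rec (ω φ p : ℝ) (f : ℝ × ℝ → ℝ × ℝ)
    (hf : ∀ s : ℝ × ℝ, f s = (s.1 + ω * s.2 + φ * (p - s.1), ω * s.2 + φ * (p - s.1)))
    (x0 v0 : ℝ) :
    (∀ k, (f^[k + 1 + 1] (x0, v0)).1 - p =
        (1 + ω - φ) * ((f^[k + 1] (x0, v0)).1 - p) - ω * ((f^[k] (x0, v0)).1 - p)) ∧
    (f^[0] (x0, v0)).1 - p = x0 - p ∧
    (f^[1] (x0, v0)).1 - p = (1 - φ) * (x0 - p) + ω * v0 ∧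
    ∀ k, (f^[k + 1] (x0, v0)).2 = (f^[k + 1] (x0, v0)).1 - (f^[k] (x0, v0)).1 := by
  have hx : ∀ k, (f^[k + 1] (x0, v0)).1 =
      (f^[k] (x0, v0)).1 + ω * (f^[k] (x0, v0)).2 + φ * (p - (f^[k] (x0, v0)).1) := by
    intro k; rw [Function.iterate_succ_apply', hf]
  have hv : ∀ k, (f^[k + 1] (x0, v0)).2 =
      ω * (f^[k] (x0, v0)).2 + φ * (p - (f^[k] (x0, v0)).1) := by
    intro k; rw [Function.iterate_succ_apply', hf]
  have hvv : ∀ k, (f^[k + 1] (x0, v0)).2 = (f^[k + 1] (x0, v0)).1 - (f^[k] (x0, v0)).1 := by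
    intro k; rw [hx k, hv k]; ring
  refine ⟨fun k => ?_, by simp, ?_, hvv⟩
  · rw [hx (k + 1), hvv k]; ring
  · rw [hx 0]; simp; ring

/-- Deterministic scalar PSO `(x,v) ↦ (x + ωv + φ(p-x), ωv + φ(p-x))` with `φ > 0`:
the linear part has characteristic polynomial `λ² - (1+ω-φ)λ + ω`, and the iteration
converges to `(p, 0)` from every initial condition iff `|ω| < 1` and `0 < φ < 2(1+ω)`. -/
theorem stmt_16 (ω φ p : ℝ) (hφ : 0 < φ)
    (f : ℝ × ℝ → ℝ × ℝ)
    (hf : ∀ s : ℝ × ℝ, f s = (s.1 + ω * s.2 + φ * (p - s.1), ω * s.2 + φ * (p - s.1))) :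
    (Matrix.charpoly (!![1 - φ, ω; -φ, ω] : Matrix (Fin 2) (Fin 2) ℝ) =
        X ^ 2 - C (1 + ω - φ) * X + C ω) ∧
      ((∀ x0 v0 : ℝ, Tendsto (fun k : ℕ => f^[k] (x0, v0)) atTop (nhds (p, 0))) ↔
        (|ω| < 1 ∧ 0 < φ ∧ φ < 2 * (1 + ω))) := by
  constructor
  · rw [Matrix.charpoly, Matrix.det_fin_two]
    simp [charmatrix_apply_eq, charmatrix_apply_ne]
    ring
  constructor
  · -- forward direction
    intro h
    have hu0 : ∀ x0 v0 : ℝ, Tendsto (fun k => (f^[k] (x0, v0)).1 - p) atTop (nhds 0) := by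
      intro x0 v0
      have h1 : Tendsto (fun k => (f^[k] (x0, v0)).1) atTop (nhds p) :=
        (continuous_fst.tendsto _).comp (h x0 v0)
      simpa using h1.sub_const p
    have hω : |ω| < 1 := by
      by_cases hω0 : ω = 0
      · rw [hω0]; norm_num
      · -- Casoratian argument
        set a : ℕ → ℝ := fun k => (f^[k] (p + 1, (φ - 1) / ω)).1 - p with hadef
        set b : ℕ → ℝ := fun k => (f^[k] (p, 1 / ω)).1 - p with hbdef
        obtain ⟨harec0, -, ha1, -⟩ := pso_rec ω φ p f hf (p + 1) ((φ - 1) / ω)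
        obtain ⟨hbrec0, -, hb1, -⟩ := pso_rec ω φ p f hf p (1 / ω)
        have harec : ∀ k, a (k + 2) = (1 + ω - φ) * a (k + 1) - ω * a k := fun k => harec0 k
        have hbrec : ∀ k, b (k + 2) = (1 + ω - φ) * b (k + 1) - ω * b k := fun k => hbrec0 k
        have ha0' : a 0 = 1 := by
          show (f^[0] (p + 1, (φ - 1) / ω)).1 - p = 1
          simp
        have hb0' : b 0 = 0 := by
          show (f^[0] (p, 1 / ω)).1 - p = 0
          simp
        have ha1' : a 1 = 0 := by
          show (f^[1] (p + 1, (φ - 1) / ω)).1 - p = 0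
          rw [ha1]; field_simp; ring
        have hb1' : b 1 = 1 := by
          show (f^[1] (p, 1 / ω)).1 - p = 1
          rw [hb1]; field_simp; ring
        set Ca : ℕ → ℝ := fun k => a k * b (k + 1) - a (k + 1) * b k with hCa
        have hCrec : ∀ k, Ca (k + 1) = ω * Ca k := by
          intro k
          have e0 : Ca (k + 1) = a (k + 1) * b (k + 2) - a (k + 2) * b (k + 1) := rfl
          have e0' : Ca k = a k * b (k + 1) - a (k + 1) * b k := rfl
          rw [e0, e0', harec k, hbrec k]; ring
        have hCform : ∀ k, Ca k = ω ^ k := by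
          intro k; induction k with
          | zero =>
            have e0 : Ca 0 = a 0 * b 1 - a 1 * b 0 := rfl
            rw [e0, ha0', ha1', hb0', hb1']; norm_num
          | succ k ih => rw [hCrec, ih, pow_succ]; ring
        have hta : Tendsto a atTop (nhds 0) := hu0 _ _
        have htb : Tendsto b atTop (nhds 0) := hu0 _ _
        have hta' : Tendsto (fun k => a (k + 1)) atTop (nhds 0) :=
          hta.comp (tendsto_add_atTop_nat 1)
        have htb' : Tendsto (fun k => b (k + 1)) atTop (nhds 0) :=
          htb.comp (tendsto_add_atTop_nat 1)
        have htC : Tendsto Ca atTop (nhds 0) := by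
          have := (hta.mul htb').sub (hta'.mul htb)
          simpa using this
        exact tendsto_pow_atTop_nhds_zero_iff.mp (htC.congr hCform)
    refine ⟨hω, hφ, ?_⟩
    by_contra h2
    push_neg at h2
    by_cases hω0 : ω = 0
    · -- ω = 0 : u (k+1) = (1-φ) u k
      subst hω0
      set u : ℕ → ℝ := fun k => (f^[k] (p + 1, 0)).1 - p with hudef
      have hx : ∀ k, u (k + 1) = (1 - φ) * u k := by
        intro k
        show (f^[k + 1] (p + 1, 0)).1 - p = (1 - φ) * ((f^[k] (p + 1, 0)).1 - p)
        rw [Function.iterate_succ_apply', hf]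
        simp; ring
      have hform : ∀ k, u k = (1 - φ) ^ k := by
        intro k; induction k with
        | zero =>
          show (f^[0] (p + 1, 0)).1 - p = (1 - φ) ^ 0
          simp
        | succ k ih => rw [hx, ih, pow_succ]; ring
      have h3 := tendsto_pow_atTop_nhds_zero_iff.mp ((hu0 _ _).congr hform)
      rw [abs_lt] at h3
      linarith
    · -- ω ≠ 0 : there is a real eigenvalue ≤ -1
      set t : ℝ := 1 + ω - φ with htdef
      have hω1 : -1 < ω := (abs_lt.mp hω).1
      have hω2 : ω < 1 := (abs_lt.mp hω).2
      have htle : t ≤ -(1 + ω) := by rw [htdef]; linarith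
      have hΔ : 0 ≤ t ^ 2 - 4 * ω := by nlinarith [sq_nonneg (1 - ω), sq_nonneg (1 + ω)]
      set s : ℝ := Real.sqrt (t ^ 2 - 4 * ω) with hsdef
      have hs2 : s ^ 2 = t ^ 2 - 4 * ω := Real.sq_sqrt hΔ
      have hs0 : 0 ≤ s := Real.sqrt_nonneg _
      have hge : t + 2 ≤ s := by
        rcases le_or_gt (t + 2) 0 with hc | hc
        · linarith
        · rw [hsdef]
          exact (Real.le_sqrt' hc).mpr (by nlinarith)
      set lam : ℝ := (t - s) / 2 with hlamdef
      have hlam1 : lam ≤ -1 := by rw [hlamdef]; linarith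
      have hroot : lam ^ 2 = t * lam - ω := by rw [hlamdef]; nlinarith [hs2]
      obtain ⟨hrec0, -, hu1e, -⟩ := pso_rec ω φ p f hf (p + 1) ((lam - (1 - φ)) / ω)
      set u : ℕ → ℝ := fun k => (f^[k] (p + 1, (lam - (1 - φ)) / ω)).1 - p with hudef
      have hrec : ∀ k, u (k + 2) = t * u (k + 1) - ω * u k := fun k => hrec0 k
      have hgrec : ∀ k, lam ^ (k + 2) = t * lam ^ (k + 1) - ω * lam ^ k := by
        intro k
        calc lam ^ (k + 2) = lam ^ k * lam ^ 2 := by ring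
        _ = lam ^ k * (t * lam - ω) := by rw [hroot]
        _ = t * lam ^ (k + 1) - ω * lam ^ k := by ring
      have hform : ∀ k, u k = lam ^ k := by
        refine rec_unique t ω u (fun k => lam ^ k) hrec hgrec ?_ ?_
        · show (f^[0] (p + 1, (lam - (1 - φ)) / ω)).1 - p = lam ^ 0
          simp
        · show (f^[1] (p + 1, (lam - (1 - φ)) / ω)).1 - p = lam ^ 1
          rw [hu1e]; field_simp; ring
      have h3 := tendsto_pow_atTop_nhds_zero_iff.mp ((hu0 _ _).congr hform)
      rw [abs_lt] at h3
      linarith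
  · -- backward direction
    rintro ⟨hω, -, h2⟩ x0 v0
    have hω1 : -1 < ω := (abs_lt.mp hω).1
    have ht : |1 + ω - φ| < 1 + ω := by
      rw [abs_lt]; constructor <;> linarith
    obtain ⟨hrec0, -, -, hvv⟩ := pso_rec ω φ p f hf x0 v0
    set u : ℕ → ℝ := fun k => (f^[k] (x0, v0)).1 - p with hudef
    have hrec : ∀ k, u (k + 2) = (1 + ω - φ) * u (k + 1) - ω * u k := fun k => hrec0 k
    have hut : Tendsto u atTop (nhds 0) := rec_tendsto (1 + ω - φ) ω hω ht u hrec
    have hxt : Tendsto (fun k => (f^[k] (x0, v0)).1) atTop (nhds p) := by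
      have := hut.add_const p
      simp only [hudef] at this
      simpa using this
    have hvt : Tendsto (fun k => (f^[k] (x0, v0)).2) atTop (nhds 0) := by
      have h1 : Tendsto (fun k => u (k + 1) - u k) atTop (nhds 0) := by
        have := (hut.comp (tendsto_add_atTop_nat 1)).sub hut
        simpa using this
      have h2' : Tendsto (fun k => (f^[k + 1] (x0, v0)).2) atTop (nhds 0) := by
        refine h1.congr fun k => ?_
        rw [hvv k]
        show (f^[k + 1] (x0, v0)).1 - p - ((f^[k] (x0, v0)).1 - p) = _
        ring
      exact (tendsto_add_atTop_iff_nat 1).mp h2'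
    exact (hxt.prodMk_nhds hvt).congr fun k => rfl
end
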